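/- Let G be a finite hypergroup. Define Com(G) = {h : h ≺ x x̄ for some basis element x} and Com(G)^L = {y : y ≺ x₁⋯x_L for some x₁,…,x_L ∈ Com(G)}. Then the ascending chain Com(G) ⊆ Com(G)² ⊆ ⋯ stabilizes to a limit Com(G)^∞, and Com(G)^∞ is a supernormal subhypergroup of G: it is closed under involution, ℝCom(G)^∞ is closed under products, and x · Com(G)^∞ · x̄ ⊆ Com(G)^∞ for every x ∈ G. Moreover, every supernormal subhypergroup H of G contains Com(G)^∞. -/

import Mathlib

/-- A finite hypergroup: a finite basis set with involution `inv`, identity `e`,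
and nonnegative real structure constants `N x y z` (the coefficient of `z` in
the product `x·y`) making ℝA an associative unital algebra, with the involution
an anti-automorphism, and with `N x y e ≠ 0` iff `y = inv x`. -/
structure Hypergroup (A : Type) [Fintype A] [DecidableEq A] where
  N : A → A → A → ℝ
  e : A
  inv : A → A
  N_nonneg : ∀ x y z, 0 ≤ N x y z
  inv_inv : ∀ x, inv (inv x) = x
  one_mul : ∀ x z, N e x z = if z = x then 1 else 0
  mul_one : ∀ x z, N x e z = if z = x then 1 else 0
  assoc : ∀ x y z w, ∑ u, N x y u * N u z w = ∑ u, N y z u * N x u w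
  inv_anti : ∀ x y z, N (inv y) (inv x) (inv z) = N x y z
  dual : ∀ x y, N x y e ≠ 0 ↔ y = inv x

namespace Hypergroup

variable {A : Type} [Fintype A] [DecidableEq A]

/-- The coefficient of a basis element `z` in the product `x₁ ⋯ xₙ` of a list
of basis elements (the empty product being the identity `e`). -/
def coeff (H : Hypergroup A) : List A → A → ℝ
  | [], z => if z = H.e then 1 else 0
  | x :: l, z => ∑ y, H.coeff l y * H.N x y z

end Hypergroup

/-- `Com H` is the set of basis elements appearing in some product x·x̄. -/
def Hypergroup.Com {A : Type} [Fintype A] [DecidableEq A] (H : Hypergroup A) : Set A :=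
  {h | ∃ x, 0 < H.N x (H.inv x) h}

/-- `ComL H L` is the set of basis elements appearing in some product of L
elements of `Com H`. -/
def Hypergroup.ComL {A : Type} [Fintype A] [DecidableEq A] (H : Hypergroup A)
    (L : ℕ) : Set A :=
  {y | ∃ l : List A, l.length = L ∧ (∀ z ∈ l, z ∈ H.Com) ∧ 0 < H.coeff l y}

set_option linter.unusedSectionVars false

lemma mul_pos_decomp {a b : ℝ} (ha : 0 ≤ a) (hb : 0 ≤ b) (h : 0 < a * b) :
    0 < a ∧ 0 < b := by
  constructor
  · rcases ha.lt_or_eq with h1 | h1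
    · exact h1
    · exfalso; rw [← h1] at h; simp at h
  · rcases hb.lt_or_eq with h1 | h1
    · exact h1
    · exfalso; rw [← h1] at h; simp at h

namespace Hypergroup

variable {A : Type} [Fintype A] [DecidableEq A] (H : Hypergroup A)

lemma coeff_nonneg : ∀ (l : List A) (z : A), 0 ≤ H.coeff l z := by
  intro l
  induction l with
  | nil => intro z; simp only [coeff]; positivity
  | cons x l ih =>
    intro z
    exact Finset.sum_nonneg fun y _ => mul_nonneg (ih y) (H.N_nonneg x y z)

lemma sum_pos_iff {f : A → ℝ} (h : ∀ i, 0 ≤ f i) :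
    0 < ∑ i, f i ↔ ∃ i, 0 < f i := by
  constructor
  · intro hs
    by_contra hc
    push_neg at hc
    have : ∑ i, f i ≤ 0 := Finset.sum_nonpos fun i _ => hc i
    linarith
  · rintro ⟨i, hi⟩
    exact lt_of_lt_of_le hi (Finset.single_le_sum (fun j _ => h j) (Finset.mem_univ i))

lemma inv_e : H.inv H.e = H.e := by
  have := (H.dual H.e H.e).mp (by rw [H.one_mul]; simp)
  exact this.symm

lemma inv_injective : Function.Injective H.inv := by
  intro a b hab
  have := congrArg H.inv hab
  rwa [H.inv_inv, H.inv_inv] at this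

lemma pos_xxe (x : A) : 0 < H.N x (H.inv x) H.e :=
  lt_of_le_of_ne (H.N_nonneg _ _ _) (Ne.symm ((H.dual x (H.inv x)).mpr rfl))

lemma frob (x y z : A) :
    H.N x y z * H.N z (H.inv z) H.e = H.N y (H.inv z) (H.inv x) * H.N x (H.inv x) H.e := by
  have h := H.assoc x y (H.inv z) H.e
  rw [Finset.sum_eq_single z, Finset.sum_eq_single (H.inv x)] at h
  · exact h
  · intro u _ hu
    have : H.N x u H.e = 0 := by
      by_contra hne
      exact hu ((H.dual x u).mp hne)
    rw [this, mul_zero]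
  · intro hu; exact absurd (Finset.mem_univ _) hu
  · intro u _ hu
    have : H.N u (H.inv z) H.e = 0 := by
      by_contra hne
      have := (H.dual u (H.inv z)).mp hne
      exact hu (H.inv_injective this).symm
    rw [this, mul_zero]
  · intro hu; exact absurd (Finset.mem_univ _) hu

lemma P1pos {x y z : A} (h : 0 < H.N x y z) : 0 < H.N y (H.inv z) (H.inv x) := by
  have hf := H.frob x y z
  have h1 : 0 < H.N x y z * H.N z (H.inv z) H.e := mul_pos h (H.pos_xxe z)
  rw [hf] at h1
  exact (mul_pos_decomp (H.N_nonneg _ _ _) (H.N_nonneg _ _ _) h1).1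

lemma move1 {b c s : A} (h : 0 < H.N b c s) : 0 < H.N (H.inv b) s c := by
  have h1 := H.P1pos (H.P1pos h)
  rw [H.inv_inv] at h1
  have h2 : H.N (H.inv b) s c = H.N (H.inv s) b (H.inv c) := by
    have := H.inv_anti (H.inv s) b (H.inv c)
    rw [H.inv_inv, H.inv_inv] at this
    exact this
  rwa [h2]

lemma assoc_pos {x y t z w : A} (h1 : 0 < H.N x y t) (h2 : 0 < H.N t z w) :
    ∃ v, 0 < H.N y z v ∧ 0 < H.N x v w := by
  have ha := H.assoc x y z w
  have hl : 0 < ∑ u, H.N x y u * H.N u z w := by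
    rw [sum_pos_iff (fun i => mul_nonneg (H.N_nonneg _ _ _) (H.N_nonneg _ _ _))]
    exact ⟨t, mul_pos h1 h2⟩
  rw [ha, sum_pos_iff (fun i => mul_nonneg (H.N_nonneg _ _ _) (H.N_nonneg _ _ _))] at hl
  obtain ⟨v, hv⟩ := hl
  exact ⟨v, mul_pos_decomp (H.N_nonneg _ _ _) (H.N_nonneg _ _ _) hv⟩

lemma assoc_pos' {x y t z w : A} (h1 : 0 < H.N y z t) (h2 : 0 < H.N x t w) :
    ∃ v, 0 < H.N x y v ∧ 0 < H.N v z w := by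
  have ha := H.assoc x y z w
  have hl : 0 < ∑ u, H.N y z u * H.N x u w := by
    rw [sum_pos_iff (fun i => mul_nonneg (H.N_nonneg _ _ _) (H.N_nonneg _ _ _))]
    exact ⟨t, mul_pos h1 h2⟩
  rw [← ha, sum_pos_iff (fun i => mul_nonneg (H.N_nonneg _ _ _) (H.N_nonneg _ _ _))] at hl
  obtain ⟨v, hv⟩ := hl
  exact ⟨v, mul_pos_decomp (H.N_nonneg _ _ _) (H.N_nonneg _ _ _) hv⟩


lemma coeff_single (x z : A) : H.coeff [x] z = if z = x then 1 else 0 := by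
  simp only [coeff]
  rw [Finset.sum_eq_single H.e]
  · simp [H.mul_one]
  · intro b _ hb; simp [hb]
  · intro h; exact absurd (Finset.mem_univ _) h

lemma coeff_cons_pos {x : A} {l : List A} {z : A} :
    0 < H.coeff (x :: l) z ↔ ∃ t, 0 < H.coeff l t ∧ 0 < H.N x t z := by
  show 0 < ∑ y, H.coeff l y * H.N x y z ↔ _
  rw [sum_pos_iff (fun i => mul_nonneg (H.coeff_nonneg _ _) (H.N_nonneg _ _ _))]
  constructor
  · rintro ⟨t, ht⟩
    exact ⟨t, mul_pos_decomp (H.coeff_nonneg _ _) (H.N_nonneg _ _ _) ht⟩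
  · rintro ⟨t, h1, h2⟩
    exact ⟨t, mul_pos h1 h2⟩

omit H in
lemma S1 (f : A → ℝ) (g h : A → A → ℝ) :
    ∑ y, (∑ v, f v * g v y) * h y y = ∑ v, f v * ∑ y, g v y * h y y := by
  simp only [Finset.sum_mul, Finset.mul_sum]
  rw [Finset.sum_comm]
  exact Finset.sum_congr rfl fun v _ => Finset.sum_congr rfl fun y _ => by ring

/-- intermediate: coefficient of z in (product l) * v -/
def Dcoeff : List A → A → A → ℝ
  | [], v, z => if z = v then 1 else 0
  | x :: l, v, z => ∑ y, Dcoeff l v y * H.N x y z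

lemma coeff_append_D (l₁ l₂ : List A) (z : A) :
    H.coeff (l₁ ++ l₂) z = ∑ v, H.coeff l₂ v * H.Dcoeff l₁ v z := by
  induction l₁ generalizing z with
  | nil =>
    simp only [List.nil_append, Dcoeff, mul_ite, mul_one, mul_zero]
    rw [Finset.sum_ite_eq]
    simp
  | cons x l ih =>
    show (∑ y, H.coeff (l ++ l₂) y * H.N x y z) = _
    calc (∑ y, H.coeff (l ++ l₂) y * H.N x y z)
        = ∑ y, (∑ v, H.coeff l₂ v * H.Dcoeff l v y) * H.N x y z :=
          Finset.sum_congr rfl fun y _ => by rw [ih]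
      _ = ∑ v, H.coeff l₂ v * ∑ y, H.Dcoeff l v y * H.N x y z :=
          S1 (H.coeff l₂) (fun v y => H.Dcoeff l v y) (fun _ y => H.N x y z)
      _ = ∑ v, H.coeff l₂ v * H.Dcoeff (x :: l) v z := rfl

lemma Dcoeff_eq (l : List A) (v z : A) :
    H.Dcoeff l v z = ∑ u, H.coeff l u * H.N u v z := by
  induction l generalizing z with
  | nil =>
    simp only [Dcoeff, coeff, ite_mul, one_mul, zero_mul]
    rw [Finset.sum_ite_eq']
    simp [H.one_mul]
  | cons x l ih =>
    show (∑ y, H.Dcoeff l v y * H.N x y z) = _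
    calc (∑ y, H.Dcoeff l v y * H.N x y z)
        = ∑ y, (∑ u, H.coeff l u * H.N u v y) * H.N x y z :=
          Finset.sum_congr rfl fun y _ => by rw [ih]
      _ = ∑ u, H.coeff l u * ∑ y, H.N u v y * H.N x y z :=
          S1 (H.coeff l) (fun u y => H.N u v y) (fun _ y => H.N x y z)
      _ = ∑ u, H.coeff l u * ∑ t, H.N x u t * H.N t v z :=
          Finset.sum_congr rfl fun u _ => by rw [H.assoc x u v z]
      _ = ∑ t, (∑ u, H.coeff l u * H.N x u t) * H.N t v z := by
          simp only [Finset.mul_sum, Finset.sum_mul]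
          rw [Finset.sum_comm]
          exact Finset.sum_congr rfl fun t _ => Finset.sum_congr rfl fun u _ => by ring
      _ = ∑ u, H.coeff (x :: l) u * H.N u v z := rfl

lemma coeff_append (l₁ l₂ : List A) (z : A) :
    H.coeff (l₁ ++ l₂) z = ∑ v, H.coeff l₂ v * ∑ u, H.coeff l₁ u * H.N u v z := by
  rw [coeff_append_D]
  exact Finset.sum_congr rfl fun v _ => by rw [Dcoeff_eq]

lemma coeff_append_pos {l₁ l₂ : List A} {a b z : A} (h1 : 0 < H.coeff l₁ a)
    (h2 : 0 < H.coeff l₂ b) (h3 : 0 < H.N a b z) : 0 < H.coeff (l₁ ++ l₂) z := by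
  rw [coeff_append]
  have inner : ∀ v, 0 ≤ ∑ u, H.coeff l₁ u * H.N u v z := fun v =>
    Finset.sum_nonneg fun u _ => mul_nonneg (H.coeff_nonneg _ _) (H.N_nonneg _ _ _)
  rw [sum_pos_iff (fun v => mul_nonneg (H.coeff_nonneg _ _) (inner v))]
  refine ⟨b, mul_pos h2 ?_⟩
  rw [sum_pos_iff (fun u => mul_nonneg (H.coeff_nonneg _ _) (H.N_nonneg _ _ _))]
  exact ⟨a, mul_pos h1 h3⟩


lemma coeff_rev_inv (l : List A) (z : A) :
    H.coeff ((l.map H.inv).reverse) (H.inv z) = H.coeff l z := by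
  induction l generalizing z with
  | nil =>
    simp only [List.map_nil, List.reverse_nil, coeff]
    by_cases h : z = H.e
    · rw [if_pos h, if_pos (by rw [h, H.inv_e])]
    · rw [if_neg h, if_neg (fun hc => h (by
        have := congrArg H.inv hc
        rwa [H.inv_inv, H.inv_e] at this))]
  | cons x l ih =>
    have hlist : ((x :: l).map H.inv).reverse = (l.map H.inv).reverse ++ [H.inv x] := by
      simp
    rw [hlist, coeff_append]
    have hsingle : ∀ v, H.coeff [H.inv x] v = if v = H.inv x then 1 else 0 :=
      fun v => H.coeff_single _ _
    calc (∑ v, H.coeff [H.inv x] v * ∑ u, H.coeff ((l.map H.inv).reverse) u * H.N u v (H.inv z))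
        = ∑ u, H.coeff ((l.map H.inv).reverse) u * H.N u (H.inv x) (H.inv z) := by
          rw [Finset.sum_eq_single (H.inv x)]
          · rw [hsingle, if_pos rfl, _root_.one_mul]
          · intro b _ hb; rw [hsingle, if_neg hb, zero_mul]
          · intro hb; exact absurd (Finset.mem_univ _) hb
      _ = ∑ u, H.coeff ((l.map H.inv).reverse) (H.inv u) * H.N (H.inv u) (H.inv x) (H.inv z) := by
          refine Fintype.sum_bijective H.inv (Function.Involutive.bijective H.inv_inv) _ _ ?_
          intro u; rw [H.inv_inv]
      _ = ∑ u, H.coeff l u * H.N x u z := by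
          refine Finset.sum_congr rfl fun u _ => ?_
          rw [ih, H.inv_anti]
      _ = H.coeff (x :: l) z := rfl

lemma e_mem_com : H.e ∈ H.Com :=
  ⟨H.e, H.pos_xxe H.e⟩

lemma com_inv {h : A} (hh : h ∈ H.Com) : H.inv h ∈ H.Com := by
  obtain ⟨x, hx⟩ := hh
  refine ⟨x, ?_⟩
  have := H.inv_anti x (H.inv x) h
  rw [H.inv_inv] at this
  rwa [← this] at hx

lemma comL_zero {y : A} : y ∈ H.ComL 0 ↔ y = H.e := by
  constructor
  · rintro ⟨l, hl, _, hpos⟩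
    rw [List.length_eq_zero_iff] at hl
    subst hl
    simp only [coeff] at hpos
    by_contra h
    rw [if_neg h] at hpos
    exact lt_irrefl 0 hpos
  · rintro rfl
    exact ⟨[], rfl, by simp, by simp [coeff]⟩

lemma com_subset_comL_one {y : A} (hy : y ∈ H.Com) : y ∈ H.ComL 1 :=
  ⟨[y], rfl, by simpa using hy, by rw [H.coeff_single, if_pos rfl]; norm_num⟩

lemma comL_succ {y : A} {L : ℕ} :
    y ∈ H.ComL (L + 1) ↔ ∃ c ∈ H.Com, ∃ m ∈ H.ComL L, 0 < H.N c m y := by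
  constructor
  · rintro ⟨l, hl, hmem, hpos⟩
    cases l with
    | nil => simp at hl
    | cons c l' =>
      obtain ⟨m, hm1, hm2⟩ := H.coeff_cons_pos.mp hpos
      refine ⟨c, hmem c (by simp), m, ⟨l', by simpa using hl,
        fun z hz => hmem z (by simp [hz]), hm1⟩, hm2⟩
  · rintro ⟨c, hc, m, ⟨l', hl1, hl2, hl3⟩, hpos⟩
    exact ⟨c :: l', by simpa using hl1, by
      intro z hz
      rcases List.mem_cons.mp hz with rfl | hz
      · exact hc
      · exact hl2 z hz, H.coeff_cons_pos.mpr ⟨m, hl3, hpos⟩⟩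

lemma comL_mono {L : ℕ} : H.ComL L ⊆ H.ComL (L + 1) := by
  rintro y ⟨l, hl, hmem, hpos⟩
  refine ⟨H.e :: l, by simpa using hl, ?_, ?_⟩
  · intro z hz
    rcases List.mem_cons.mp hz with rfl | hz
    · exact H.e_mem_com
    · exact hmem z hz
  · refine H.coeff_cons_pos.mpr ⟨y, hpos, ?_⟩
    rw [H.one_mul, if_pos rfl]; norm_num

lemma comL_le_mono {L L' : ℕ} (h : L ≤ L') : H.ComL L ⊆ H.ComL L' := by
  induction h with
  | refl => exact subset_rfl
  | step _ ih => exact fun y hy => H.comL_mono (by exact ih hy)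

lemma comL_prod {L1 L2 : ℕ} {x y z : A} (hx : x ∈ H.ComL L1) (hy : y ∈ H.ComL L2)
    (hz : 0 < H.N x y z) : z ∈ H.ComL (L1 + L2) := by
  obtain ⟨l1, hl1, hm1, hp1⟩ := hx
  obtain ⟨l2, hl2, hm2, hp2⟩ := hy
  refine ⟨l1 ++ l2, by simp [hl1, hl2], ?_, H.coeff_append_pos hp1 hp2 hz⟩
  intro w hw
  rcases List.mem_append.mp hw with hw | hw
  · exact hm1 w hw
  · exact hm2 w hw

lemma comL_inv {L : ℕ} {x : A} (hx : x ∈ H.ComL L) : H.inv x ∈ H.ComL L := by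
  obtain ⟨l, hl, hm, hp⟩ := hx
  refine ⟨(l.map H.inv).reverse, by simp [hl], ?_, ?_⟩
  · intro z hz
    rw [List.mem_reverse, List.mem_map] at hz
    obtain ⟨w, hw, rfl⟩ := hz
    exact H.com_inv (hm w hw)
  · rw [H.coeff_rev_inv]; exact hp


lemma KL {b c t s u : A} (ht : 0 < H.N b c t) (hs : 0 < H.N b c s)
    (hu : 0 < H.N t (H.inv s) u) : u ∈ H.ComL 2 := by
  -- c ≺ b̄ s
  have hc : 0 < H.N (H.inv b) s c := H.move1 hs
  -- u ≺ b (c s̄)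
  obtain ⟨v, hv1, hv2⟩ := H.assoc_pos ht hu
  -- v ≺ c s̄, c ≺ b̄ s ⇒ v ≺ b̄ (s s̄): ∃ m ≺ s s̄
  obtain ⟨m, hm1, hm2⟩ := H.assoc_pos hc hv1
  -- u ≺ b v, v ≺ b̄ m ⇒ ∃ n ≺ b b̄, u ≺ n m
  obtain ⟨n, hn1, hn2⟩ := H.assoc_pos' hm2 hv2
  have hmCom : m ∈ H.Com := ⟨s, hm1⟩
  have hnCom : n ∈ H.Com := ⟨b, hn1⟩
  exact H.comL_prod (H.com_subset_comL_one hnCom) (H.com_subset_comL_one hmCom) hn2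

lemma SN : ∀ (L : ℕ) (x h y : A), h ∈ H.ComL L →
    (∃ t, 0 < H.N h (H.inv x) t ∧ 0 < H.N x t y) → y ∈ H.ComL (2 * L + 1) := by
  intro L
  induction L with
  | zero =>
    rintro x h y hh ⟨t, ht1, ht2⟩
    have he : h = H.e := H.comL_zero.mp hh
    subst he
    rw [H.one_mul] at ht1
    have : t = H.inv x := by
      by_contra hc
      rw [if_neg hc] at ht1
      exact lt_irrefl 0 ht1
    subst this
    exact H.com_subset_comL_one ⟨x, ht2⟩
  | succ L ih =>
    rintro x h y hh ⟨t, ht1, ht2⟩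
    obtain ⟨c, ⟨w, hw⟩, m, hm, hcm⟩ := H.comL_succ.mp hh
    -- t ≺ h x̄, h ≺ c m ⇒ ∃ p: p ≺ m x̄, t ≺ c p
    obtain ⟨p, hp1, hp2⟩ := H.assoc_pos hcm ht1
    -- insert e: from 0 < N x̄ x e, 0 < N e p p: ∃ v: v ≺ x p, p ≺ x̄ v
    have hxe : 0 < H.N (H.inv x) x H.e := by
      have := H.pos_xxe (H.inv x)
      rwa [H.inv_inv] at this
    have hep : 0 < H.N H.e p p := by rw [H.one_mul, if_pos rfl]; norm_num
    obtain ⟨v, hv1, hv2⟩ := H.assoc_pos hxe hep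
    -- t ≺ c p, p ≺ x̄ v ⇒ ∃ d: d ≺ c x̄, t ≺ d v
    obtain ⟨d, hd1, hd2⟩ := H.assoc_pos' hv2 hp2
    -- y ≺ x t, t ≺ d v ⇒ ∃ u: u ≺ x d, y ≺ u v
    obtain ⟨u, hu1, hu2⟩ := H.assoc_pos' hd2 ht2
    -- u ∈ ComL 2: u ≺ x d, d ≺ c x̄, c ≺ w w̄
    have huCom : u ∈ H.ComL 2 := by
      obtain ⟨r, hr1, hr2⟩ := H.assoc_pos hw hd1
      obtain ⟨a, ha1, ha2⟩ := H.assoc_pos' hr2 hu1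
      have hs : 0 < H.N x w (H.inv r) := by
        have := H.inv_anti x w (H.inv r)
        rw [H.inv_inv] at this
        rwa [this] at hr1
      have : 0 < H.N a (H.inv (H.inv r)) u := by rwa [H.inv_inv]
      exact H.KL ha1 hs this
    -- v ∈ ComL (2L+1): v ≺ x p, p ≺ m x̄
    have hvCom : v ∈ H.ComL (2 * L + 1) := ih x m v hm ⟨p, hp1, hv1⟩
    have := H.comL_prod huCom hvCom hu2
    have heq : 2 + (2 * L + 1) = 2 * (L + 1) + 1 := by ring
    rwa [heq] at this

lemma coeff_triple (x h x' y : A) :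
    H.coeff [x, h, x'] y = ∑ t, H.N h x' t * H.N x t y := by
  show (∑ t, H.coeff [h, x'] t * H.N x t y) = _
  refine Finset.sum_congr rfl fun t _ => ?_
  congr 1
  show (∑ r, H.coeff [x'] r * H.N h r t) = _
  rw [Finset.sum_eq_single x']
  · rw [H.coeff_single, if_pos rfl, _root_.one_mul]
  · intro b _ hb; rw [H.coeff_single, if_neg hb, zero_mul]
  · intro hb; exact absurd (Finset.mem_univ _) hb

lemma coeff_triple_pos {x h x' y : A} :
    0 < H.coeff [x, h, x'] y ↔ ∃ t, 0 < H.N h x' t ∧ 0 < H.N x t y := by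
  rw [coeff_triple, sum_pos_iff (fun t => mul_nonneg (H.N_nonneg _ _ _) (H.N_nonneg _ _ _))]
  constructor
  · rintro ⟨t, ht⟩
    exact ⟨t, mul_pos_decomp (H.N_nonneg _ _ _) (H.N_nonneg _ _ _) ht⟩
  · rintro ⟨t, h1, h2⟩
    exact ⟨t, mul_pos h1 h2⟩

end Hypergroup

/-- The ascending chain Com(G) ⊆ Com(G)² ⊆ ⋯ stabilizes; its limit Com(G)^∞ is
a supernormal subhypergroup, and it is contained in every supernormal
subhypergroup of G. -/
theorem stmt_18 {A : Type} [Fintype A] [DecidableEq A] (H : Hypergroup A) :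
    (∀ L : ℕ, H.ComL L ⊆ H.ComL (L + 1)) ∧
    ∃ L0 : ℕ, (∀ L : ℕ, L0 ≤ L → H.ComL L = H.ComL L0) ∧
      (∀ x ∈ H.ComL L0, H.inv x ∈ H.ComL L0) ∧
      (∀ x ∈ H.ComL L0, ∀ y ∈ H.ComL L0, ∀ z, H.N x y z ≠ 0 → z ∈ H.ComL L0) ∧
      (∀ x : A, ∀ h ∈ H.ComL L0, ∀ y, 0 < H.coeff [x, h, H.inv x] y → y ∈ H.ComL L0) ∧
      (∀ S : Set A, S.Nonempty → (∀ x ∈ S, H.inv x ∈ S) →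
        (∀ x ∈ S, ∀ y ∈ S, ∀ z, H.N x y z ≠ 0 → z ∈ S) →
        (∀ x : A, ∀ h ∈ S, ∀ y, 0 < H.coeff [x, h, H.inv x] y → y ∈ S) →
        H.ComL L0 ⊆ S) := by
  have mono : ∀ L : ℕ, H.ComL L ⊆ H.ComL (L + 1) := fun _ => H.comL_mono
  refine ⟨mono, ?_⟩
  have hmono : Monotone (fun L => H.ComL L) := monotone_nat_of_le_succ fun n => mono n
  obtain ⟨L0, hL0⟩ := wellFoundedGT_iff_monotone_chain_condition.mp
    ⟨wellFounded_gt (α := Set A)⟩ ⟨fun L => H.ComL L, hmono⟩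
  have stable : ∀ L, L0 ≤ L → H.ComL L = H.ComL L0 := fun L hL => (hL0 L hL).symm
  refine ⟨L0, stable, ?_, ?_, ?_, ?_⟩
  · exact fun x hx => H.comL_inv hx
  · intro x hx y hy z hz
    have hpos : 0 < H.N x y z := lt_of_le_of_ne (H.N_nonneg _ _ _) (Ne.symm hz)
    have := H.comL_prod hx hy hpos
    rwa [stable (L0 + L0) (by omega)] at this
  · intro x h hh y hy
    obtain ⟨t, ht1, ht2⟩ := H.coeff_triple_pos.mp hy
    have := H.SN L0 x h y hh ⟨t, ht1, ht2⟩
    rwa [stable (2 * L0 + 1) (by omega)] at this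
  · intro S hne hinv hprod hconj
    have heS : H.e ∈ S := by
      obtain ⟨a, ha⟩ := hne
      exact hprod a ha (H.inv a) (hinv a ha) H.e (H.pos_xxe a).ne'
    have hCom : ∀ h ∈ H.Com, h ∈ S := by
      rintro h ⟨x, hx⟩
      refine hconj x H.e heS h (H.coeff_triple_pos.mpr ⟨H.inv x, ?_, hx⟩)
      rw [H.one_mul, if_pos rfl]; norm_num
    have hall : ∀ L, ∀ y ∈ H.ComL L, y ∈ S := by
      intro L
      induction L with
      | zero => intro y hy; rw [H.comL_zero.mp hy]; exact heS
      | succ L ih =>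
        intro y hy
        obtain ⟨c, hc, m, hm, hpos⟩ := H.comL_succ.mp hy
        exact hprod c (hCom c hc) m (ih m hm) y hpos.ne'
    exact fun y hy => hall L0 y hy
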